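/- Let d ≥ 1 and β, γ ∈ ℂ^{d×d}. Define sequences (δ'_n) and (δ''_n) of d×d matrices by δ'₀ = δ''₀ = 0, δ'₁ = δ''₁ = I_d, δ'_{n+1} = β δ'_n + γ δ'_{n−1} and δ''_{n+1} = δ''_n β + δ''_{n−1} γ for all n ≥ 1. Then δ'_n = δ''_n for every n ∈ ℕ. -/

import Mathlib

open Matrix PowerSeries

/-- the left recurrence `δ'_{n+1} = β δ'_n + γ δ'_{n−1}` and the right
recurrence `δ''_{n+1} = δ''_n β + δ''_{n−1} γ`, with the same initial conditions
`δ₀ = 0`, `δ₁ = I_d`, produce the same sequence of matrices. -/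
theorem stmt10 (d : ℕ) (hd : 1 ≤ d)
    (β γ : Matrix (Fin d) (Fin d) ℂ)
    (δ' δ'' : ℕ → Matrix (Fin d) (Fin d) ℂ)
    (h'0 : δ' 0 = 0) (h'1 : δ' 1 = 1)
    (h''0 : δ'' 0 = 0) (h''1 : δ'' 1 = 1)
    (hrec' : ∀ n : ℕ, 1 ≤ n → δ' (n + 1) = β * δ' n + γ * δ' (n - 1))
    (hrec'' : ∀ n : ℕ, 1 ≤ n → δ'' (n + 1) = δ'' n * β + δ'' (n - 1) * γ) :
    ∀ n : ℕ, δ' n = δ'' n := by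
  let R := Matrix (Fin d) (Fin d) ℂ
  let F' : PowerSeries R := PowerSeries.mk fun n => δ' (n + 1)
  let F'' : PowerSeries R := PowerSeries.mk fun n => δ'' (n + 1)
  let u : PowerSeries R :=
    1 - PowerSeries.C β * PowerSeries.X - PowerSeries.C γ * (PowerSeries.X * PowerSeries.X)
  have h1 : u * F' = 1 := by
    refine PowerSeries.ext fun n => ?_
    simp only [u, sub_mul, one_mul, map_sub, mul_assoc]
    match n with
    | 0 =>
      simp [F', PowerSeries.coeff_zero_X_mul, PowerSeries.coeff_C_mul,
        PowerSeries.coeff_mk, PowerSeries.coeff_one, h'1, mul_assoc]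
    | 1 =>
      have h2 := hrec' 1 le_rfl
      simp only [h'0, mul_zero, add_zero] at h2
      simp only [F', PowerSeries.coeff_C_mul, PowerSeries.coeff_succ_X_mul,
        PowerSeries.coeff_mk, PowerSeries.coeff_one, mul_assoc,
        PowerSeries.coeff_zero_X_mul, mul_zero]
      rw [h2]
      simp
    | (k + 2) =>
      have h2 := hrec' (k + 2) (by omega)
      simp only [show k + 2 - 1 = k + 1 from rfl] at h2
      simp only [F', PowerSeries.coeff_C_mul, PowerSeries.coeff_succ_X_mul,
        PowerSeries.coeff_mk, PowerSeries.coeff_one, mul_assoc]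
      rw [show k + 2 + 1 = k + 3 from rfl] at h2
      rw [h2]
      simp
  have h2 : F'' * u = 1 := by
    refine PowerSeries.ext fun n => ?_
    simp only [u, mul_sub, mul_one, map_sub, ← mul_assoc]
    match n with
    | 0 =>
      simp [F'', PowerSeries.coeff_zero_mul_X, PowerSeries.coeff_mul_C,
        PowerSeries.coeff_mk, PowerSeries.coeff_one, h''1, ← mul_assoc]
    | 1 =>
      have h3 := hrec'' 1 le_rfl
      simp only [h''0, zero_mul, add_zero] at h3
      simp only [F'', PowerSeries.coeff_mul_C, PowerSeries.coeff_succ_mul_X,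
        PowerSeries.coeff_mk, PowerSeries.coeff_one, ← mul_assoc,
        PowerSeries.coeff_zero_mul_X, zero_mul]
      rw [h3]
      simp
    | (k + 2) =>
      have h3 := hrec'' (k + 2) (by omega)
      simp only [show k + 2 - 1 = k + 1 from rfl] at h3
      simp only [F'', PowerSeries.coeff_mul_C, PowerSeries.coeff_succ_mul_X,
        PowerSeries.coeff_mk, PowerSeries.coeff_one, ← mul_assoc]
      rw [show k + 2 + 1 = k + 3 from rfl] at h3
      rw [h3]
      simp
  have hF : F' = F'' := by
    calc F' = 1 * F' := (one_mul _).symm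
    _ = (F'' * u) * F' := by rw [h2]
    _ = F'' * (u * F') := mul_assoc _ _ _
    _ = F'' := by rw [h1, mul_one]
  intro n
  match n with
  | 0 => rw [h'0, h''0]
  | (k + 1) =>
    have := congrArg (PowerSeries.coeff k) hF
    simpa [F', F'', PowerSeries.coeff_mk] using this
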